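/- arXiv:2209.03582 — 7 statements merged into one kernel-verified Lean document; each statement's English description precedes it below -/
import Mathlib

section
/- Every solution of the difference equation y_{n+1} = (3/2)|y_n| + (1/2)y_n - y_{n-1}, with real initial conditions (y_{-1}, y_0) satisfying 0 ≤ y_{-1} < y_0, is given explicitly by y_n = y_{-1} + (n+1)(y_0 - y_{-1}) for all n ≥ 1, and hence tends to +∞. -/
/-- Every solution of `y_{n+1} = (3/2)|y_n| + (1/2)y_n - y_{n-1}` with
`0 ≤ y_{-1} < y_0` satisfies `y_n = y_{-1} + (n+1)(y_0 - y_{-1})` for `n ≥ 1`,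
hence tends to `+∞`.  Here `y k` denotes the term of index `k - 1`, so
`y 0 = y_{-1}`, `y 1 = y 0`. -/
theorem stmt_0 (y : ℕ → ℝ)
    (hrec : ∀ n : ℕ, y (n + 2) = (3/2) * |y (n + 1)| + (1/2) * y (n + 1) - y n)
    (h0 : 0 ≤ y 0) (h1 : y 0 < y 1) :
    (∀ n : ℕ, 1 ≤ n → y (n + 1) = y 0 + (n + 1 : ℝ) * (y 1 - y 0)) ∧
      Filter.Tendsto y Filter.atTop Filter.atTop := by
  have key : ∀ n : ℕ, y n = y 0 + (n : ℝ) * (y 1 - y 0) ∧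
      y (n + 1) = y 0 + ((n : ℝ) + 1) * (y 1 - y 0) := by
    intro n
    induction n with
    | zero => constructor <;> simp
    | succ k ih =>
      obtain ⟨ihk, ihk1⟩ := ih
      have hpos : 0 ≤ y (k + 1) := by
        rw [ihk1]
        have : (0 : ℝ) ≤ ((k : ℝ) + 1) * (y 1 - y 0) := by exact mul_nonneg (by positivity) (by linarith)
        linarith
      have habs : |y (k + 1)| = y (k + 1) := abs_of_nonneg hpos
      refine ⟨by push_cast; linarith, ?_⟩
      have h := hrec k
      rw [habs] at h
      push_cast
      rw [h, ihk, ihk1]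
      ring
  constructor
  · intro n _
    rw [(key n).2]
  · have heq : ∀ n : ℕ, y n = y 0 + (n : ℝ) * (y 1 - y 0) := fun n => (key n).1
    have : Filter.Tendsto (fun n : ℕ => y 0 + (n : ℝ) * (y 1 - y 0))
        Filter.atTop Filter.atTop := by
      apply Filter.tendsto_atTop_add_const_left
      exact Filter.Tendsto.atTop_mul_const (by linarith)
        tendsto_natCast_atTop_atTop
    exact this.congr fun n => (heq n).symm
end

section
/- Every solution of the difference equation y_{n+1} = (3/2)|y_n| + (1/2)y_n - y_{n-1} which is not constant (i.e., not an equilibrium point) diverges to +∞. -/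
/-- Every solution of `y_{n+1} = (3/2)|y_n| + (1/2)y_n - y_{n-1}` which is not
constant diverges to `+∞`. -/
theorem stmt_2 (y : ℕ → ℝ)
    (hrec : ∀ n : ℕ, y (n + 2) = (3/2) * |y (n + 1)| + (1/2) * y (n + 1) - y n)
    (hnc : ¬ ∃ c : ℝ, ∀ n, y n = c) :
    Filter.Tendsto y Filter.atTop Filter.atTop := by
  -- Step 1: find a "good" index
  have key : ∃ n, y n ≤ y (n + 1) ∧ 0 ≤ y (n + 1) := by
    by_cases h : ∃ m, y (m + 1) < 0
    · obtain ⟨m, hm⟩ := h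
      have habs : |y (m + 1)| = -(y (m + 1)) := abs_of_neg hm
      have h2 : y (m + 2) = -(y (m + 1)) - y m := by
        rw [hrec m, habs]; ring
      by_cases hs : y m + y (m + 1) ≤ 0
      · exact ⟨m + 1, by rw [h2]; constructor <;> linarith⟩
      · push_neg at hs
        have h2neg : y (m + 2) < 0 := by linarith
        have habs2 : |y (m + 2)| = -(y (m + 2)) := abs_of_neg h2neg
        have h3 : y (m + 3) = y m := by
          have := hrec (m + 1)
          rw [show m + 1 + 2 = m + 3 from rfl, show m + 1 + 1 = m + 2 from rfl,
            habs2] at this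
          rw [this, h2]; ring
        refine ⟨m + 2, ?_, ?_⟩
        · rw [show m + 2 + 1 = m + 3 from rfl, h3]; linarith
        · rw [show m + 2 + 1 = m + 3 from rfl, h3]; linarith
    · push_neg at h
      have hlin : ∀ n, y (n + 2) = 2 * y (n + 1) - y n := by
        intro n
        rw [hrec n, abs_of_nonneg (h n)]; ring
      by_cases hd : y 0 ≤ y 1
      · exact ⟨0, hd, h 0⟩
      · exfalso
        push_neg at hd
        set d : ℝ := y 1 - y 0 with hddef
        have hdneg : d < 0 := by simp [hddef]; linarith
        have hform : ∀ m, y (m + 1) = y m + d := by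
          intro m
          induction m with
          | zero => simp [hddef]
          | succ k ih => rw [hlin k, ih]; ring
        have hform2 : ∀ m : ℕ, y (m + 1) = y 1 + m * d := by
          intro m
          induction m with
          | zero => simp
          | succ k ih =>
            rw [hform (k + 1), ih]; push_cast; ring
        obtain ⟨m, hmgt⟩ := exists_nat_gt (y 1 / (-d))
        have : y 1 < m * (-d) := by
          rw [div_lt_iff₀ (by linarith)] at hmgt; linarith
        have hneg : y (m + 1) < 0 := by rw [hform2 m]; linarith
        exact absurd (h m) (not_le.mpr hneg)
  obtain ⟨n, hle, hpos⟩ := key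
  set d : ℝ := y (n + 1) - y n with hddef
  have hd0 : 0 ≤ d := by simp [hddef]; linarith
  -- the sequence is arithmetic from n on
  have step : ∀ k, y (n + k + 1) = y (n + k) + d ∧ 0 ≤ y (n + k + 1) := by
    intro k
    induction k with
    | zero => exact ⟨by simp [hddef], hpos⟩
    | succ k ih =>
      obtain ⟨ih1, ih2⟩ := ih
      have hrw : y (n + (k + 1) + 1) = 2 * y (n + k + 1) - y (n + k) := by
        have := hrec (n + k)
        rw [show n + k + 2 = n + (k + 1) + 1 by ring,
          abs_of_nonneg ih2] at this
        rw [this]; ring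
      constructor
      · rw [hrw, show n + (k + 1) = n + k + 1 from rfl, ih1]; ring
      · rw [hrw]; nlinarith
  have fwd : ∀ k : ℕ, y (n + 1 + k) = y (n + 1) + k * d := by
    intro k
    induction k with
    | zero => simp
    | succ k ih =>
      have := (step (k + 1)).1
      rw [show n + 1 + (k + 1) = n + (k + 1) + 1 by ring, this,
        show n + (k + 1) = n + 1 + k by ring, ih]
      push_cast; ring
  rcases eq_or_lt_of_le hd0 with hdz | hdpos
  · -- d = 0 : the sequence is constant, contradiction
    exfalso
    set c : ℝ := y (n + 1) with hcdef
    have hc0 : 0 ≤ c := hpos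
    have htail : ∀ k : ℕ, y (n + k) = c := by
      intro k
      cases k with
      | zero => have := (step 0).1; simp at this; rw [show (n:ℕ) + 0 = n by ring]; rw [hcdef]; linarith [hd0, hdz.symm ▸ this]
      | succ k =>
        have := fwd k
        rw [show n + (k + 1) = n + 1 + k by ring, this, ← hdz]
        simp
    have hback : ∀ k : ℕ, y (n - k) = c ∧ y (n - k + 1) = c := by
      intro k
      induction k with
      | zero =>
        constructor
        · have := htail 0; simpa using this
        · have := htail 1; simpa using this
      | succ k ih =>
        obtain ⟨ih1, ih2⟩ := ih
        by_cases hk : k < n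
        · have e1 : n - (k + 1) + 1 = n - k := by omega
          have e2 : n - (k + 1) + 2 = n - k + 1 := by omega
          have := hrec (n - (k + 1))
          rw [e1, e2, ih1, ih2, abs_of_nonneg hc0] at this
          constructor
          · linarith
          · rw [e1]; exact ih1
        · have e1 : n - (k + 1) = n - k := by omega
          rw [e1]; exact ⟨ih1, ih2⟩
    have hall : ∀ m, y m = c := by
      intro m
      by_cases hm : m ≤ n
      · have := (hback (n - m)).1
        rwa [show n - (n - m) = m by omega] at this
      · have := htail (m - n)
        rwa [show n + (m - n) = m by omega] at this
    exact hnc ⟨c, hall⟩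
  · -- d > 0 : divergence
    rw [Filter.tendsto_atTop_atTop]
    intro b
    obtain ⟨k, hk⟩ := exists_nat_ge ((b - y (n + 1)) / d)
    refine ⟨n + 1 + k, fun m hm => ?_⟩
    have hkd : b - y (n + 1) ≤ k * d := by
      rw [div_le_iff₀ hdpos] at hk; linarith
    have hrep : m = n + 1 + (m - (n + 1)) := by omega
    rw [hrep, fwd (m - (n + 1))]
    have hkk : (k : ℝ) ≤ (m - (n + 1) : ℕ) := by
      have : k ≤ m - (n + 1) := by omega
      exact_mod_cast this
    nlinarith
end

section
/- Let |a| > 1/2. The initial conditions (x_{-1}, x_0) generating 2-periodic (non-constant, period exactly 2) solutions of x_{n+1} = 1 - a|x_n| + a·x_{n-1} are exactly (1/(2a²-2a+1), (1-2a)/(2a²-2a+1)) and ((1-2a)/(2a²-2a+1), 1/(2a²-2a+1)), and these exist only when a > 1/2. -/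
/-- For `|a| > 1/2`, the initial conditions generating genuinely 2-periodic
solutions of `x_{n+1} = 1 - a|x_n| + a x_{n-1}` are exactly the two pairs
`(1/(2a²-2a+1), (1-2a)/(2a²-2a+1))` and its swap, and they exist only for
`a > 1/2`. -/
theorem stmt_5 (a : ℝ) (ha : 1/2 < |a|) (x y : ℝ) :
    (x ≠ y ∧ x = 1 - a * |y| + a * x ∧ y = 1 - a * |x| + a * y) ↔
      (1/2 < a ∧
        ((x, y) = (1 / (2*a^2 - 2*a + 1), (1 - 2*a) / (2*a^2 - 2*a + 1)) ∨
         (x, y) = ((1 - 2*a) / (2*a^2 - 2*a + 1), 1 / (2*a^2 - 2*a + 1)))) := by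
  have hD : (0:ℝ) < 2*a^2 - 2*a + 1 := by nlinarith [sq_nonneg (2*a - 1)]
  have hD' : (2*a^2 - 2*a + 1 : ℝ) ≠ 0 := ne_of_gt hD
  constructor
  · rintro ⟨hxy, h1, h2⟩
    rcases le_or_gt 0 x with hx | hx <;> rcases le_or_gt 0 y with hy | hy
    · -- both nonneg: a = 1/2, contradiction with |a| > 1/2
      rw [abs_of_nonneg hy] at h1
      rw [abs_of_nonneg hx] at h2
      have ha2 : a = 1/2 := by
        have h3 : (x - y) * (1 - 2*a) = 0 := by linarith [h1, h2, mul_comm a x]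
        rcases mul_eq_zero.mp (by linear_combination h1 - h2 : (x - y) * (1 - 2*a) = 0) with h | h
        · exact absurd (by linarith) hxy
        · linarith
      rw [ha2] at ha
      rw [abs_of_pos (by norm_num : (0:ℝ) < 1/2)] at ha
      linarith
    · -- x ≥ 0, y < 0 : first solution
      rw [abs_of_neg hy] at h1
      rw [abs_of_nonneg hx] at h2
      have hxD : x * (2*a^2 - 2*a + 1) = 1 := by linear_combination (1 - a) * h1 + a * h2
      have hyD : y * (2*a^2 - 2*a + 1) = 1 - 2*a := by linear_combination (1 - a) * h2 - a * h1
      have hxv : x = 1 / (2*a^2 - 2*a + 1) := by rw [eq_div_iff hD']; linarith [hxD]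
      have hyv : y = (1 - 2*a) / (2*a^2 - 2*a + 1) := by rw [eq_div_iff hD']; linarith [hyD]
      have ha12 : 1/2 < a := by nlinarith
      exact ⟨ha12, Or.inl (by rw [hxv, hyv])⟩
    · -- x < 0, y ≥ 0 : second solution
      rw [abs_of_nonneg hy] at h1
      rw [abs_of_neg hx] at h2
      have hyD : y * (2*a^2 - 2*a + 1) = 1 := by linear_combination (1 - a) * h2 + a * h1
      have hxD : x * (2*a^2 - 2*a + 1) = 1 - 2*a := by linear_combination (1 - a) * h1 - a * h2
      have hyv : y = 1 / (2*a^2 - 2*a + 1) := by rw [eq_div_iff hD']; linarith [hyD]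
      have hxv : x = (1 - 2*a) / (2*a^2 - 2*a + 1) := by rw [eq_div_iff hD']; linarith [hxD]
      have ha12 : 1/2 < a := by nlinarith
      exact ⟨ha12, Or.inr (by rw [hxv, hyv])⟩
    · -- both negative: x = y, contradiction
      rw [abs_of_neg hy] at h1
      rw [abs_of_neg hx] at h2
      exact absurd (by linarith : x = y) hxy
  · rintro ⟨ha12, h | h⟩ <;> obtain ⟨hx, hy⟩ := Prod.mk.injEq .. ▸ h <;> subst hx <;> subst hy
    · have hne : (1:ℝ) / (2*a^2 - 2*a + 1) ≠ (1 - 2*a) / (2*a^2 - 2*a + 1) := by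
        intro h; rw [div_eq_div_iff hD' hD'] at h; nlinarith
      have hay : |(1 - 2*a) / (2*a^2 - 2*a + 1)| = (2*a - 1) / (2*a^2 - 2*a + 1) := by
        rw [abs_of_neg (by apply div_neg_of_neg_of_pos <;> [linarith; exact hD])]
        ring
      have hax : |(1:ℝ) / (2*a^2 - 2*a + 1)| = 1 / (2*a^2 - 2*a + 1) := by
        rw [abs_of_pos (by positivity)]
      have hF : (2 * a * (a - 1) + 1) ≠ 0 := by rw [show 2 * a * (a - 1) + 1 = 2*a^2 - 2*a + 1 by ring]; exact hD'
      refine ⟨hne, ?_, ?_⟩ <;> simp only [hax, hay] <;> field_simp <;> ring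
    · have hne : (1 - 2*a) / (2*a^2 - 2*a + 1) ≠ (1:ℝ) / (2*a^2 - 2*a + 1) := by
        intro h; rw [div_eq_div_iff hD' hD'] at h; nlinarith
      have hay : |(1 - 2*a) / (2*a^2 - 2*a + 1)| = (2*a - 1) / (2*a^2 - 2*a + 1) := by
        rw [abs_of_neg (by apply div_neg_of_neg_of_pos <;> [linarith; exact hD])]
        ring
      have hax : |(1:ℝ) / (2*a^2 - 2*a + 1)| = 1 / (2*a^2 - 2*a + 1) := by
        rw [abs_of_pos (by positivity)]
      have hF : (2 * a * (a - 1) + 1) ≠ 0 := by rw [show 2 * a * (a - 1) + 1 = 2*a^2 - 2*a + 1 by ring]; exact hD'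
      refine ⟨hne, ?_, ?_⟩ <;> simp only [hax, hay] <;> field_simp <;> ring
end

section
/- If a pair (x, y) generates a 2-periodic solution of x_{n+1} = 1 - (1/2)|x_n| + (1/2)x_{n-1} (i.e., x = 1 - (1/2)|y| + (1/2)x and y = 1 - (1/2)|x| + (1/2)y, with x ≠ y), then 0 ≤ x ≤ 2, 0 ≤ y ≤ 2, and x + y = 2. Conversely, every pair (x, y) with 0 ≤ x, y ≤ 2, x + y = 2 and x ≠ y generates a 2-periodic solution. -/
/-- `(x, y)` generates a (non-constant) 2-periodic solution of
`x_{n+1} = 1 - (1/2)|x_n| + (1/2)x_{n-1}` iff `0 ≤ x, y ≤ 2`, `x + y = 2` and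
`x ≠ y`. -/
theorem stmt_9 (x y : ℝ) :
    (x = 1 - (1/2) * |y| + (1/2) * x ∧ y = 1 - (1/2) * |x| + (1/2) * y ∧ x ≠ y)
      ↔ (0 ≤ x ∧ x ≤ 2 ∧ 0 ≤ y ∧ y ≤ 2 ∧ x + y = 2 ∧ x ≠ y) := by
  constructor
  · rintro ⟨h1, h2, hne⟩
    rcases abs_cases x with ⟨ex, px⟩ | ⟨ex, px⟩ <;>
      rcases abs_cases y with ⟨ey, py⟩ | ⟨ey, py⟩ <;>
        rw [ex] at h2 <;> rw [ey] at h1 <;>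
          refine ⟨by linarith, by linarith, by linarith, by linarith, by linarith, hne⟩
  · rintro ⟨hx0, hx2, hy0, hy2, hsum, hne⟩
    rw [abs_of_nonneg hx0, abs_of_nonneg hy0]
    exact ⟨by linarith, by linarith, hne⟩
end

section
/- The triangles Δ_ℓ = {(x,y) : 0 ≤ x ≤ 2, 0 ≤ y ≤ 2, x + y ≤ 2} and Δ_u = {(x,y) : 0 ≤ x ≤ 2, 0 ≤ y ≤ 2, x + y ≥ 2} are each invariant under the map F(x,y) = (y, 1 - (1/2)|y| + (1/2)x), i.e., F(Δ_ℓ) ⊆ Δ_ℓ and F(Δ_u) ⊆ Δ_u. -/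
/-- The triangles `Δℓ` and `Δu` are invariant under
`F(x,y) = (y, 1 - (1/2)|y| + (1/2)x)`. -/
theorem stmt_10 :
    let F : ℝ × ℝ → ℝ × ℝ := fun p => (p.2, 1 - (1/2) * |p.2| + (1/2) * p.1)
    let Δl : Set (ℝ × ℝ) :=
      {p | 0 ≤ p.1 ∧ p.1 ≤ 2 ∧ 0 ≤ p.2 ∧ p.2 ≤ 2 ∧ p.1 + p.2 ≤ 2}
    let Δu : Set (ℝ × ℝ) :=
      {p | 0 ≤ p.1 ∧ p.1 ≤ 2 ∧ 0 ≤ p.2 ∧ p.2 ≤ 2 ∧ 2 ≤ p.1 + p.2}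
    F '' Δl ⊆ Δl ∧ F '' Δu ⊆ Δu := by
  intro F Δl Δu
  constructor <;>
  · rintro _ ⟨⟨x, y⟩, ⟨hx0, hx2, hy0, hy2, hs⟩, rfl⟩
    simp only [F, Set.mem_setOf_eq]
    rw [abs_of_nonneg hy0]
    refine ⟨hy0, hy2, ?_, ?_, ?_⟩ <;> dsimp only <;> linarith
end

section
/- The solution of the difference equation x_{n+1} = 1 - (1/2)|x_n| + (1/2)x_{n-1} with initial conditions x_{-1} = x_0 = 0 satisfies x_n = (1/3)(-1)^{n+1} - (4/3)(1/2)^{n+1} + 1 for all n ≥ -1; in particular x_n ≥ 0 for all n ≥ 1, x_{2n} → 2/3 and x_{2n+1} → 4/3. -/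
private lemma fnonneg (k : ℕ) (hk : 1 ≤ k) :
    0 ≤ (1/3) * (-1 : ℝ)^k - (4/3) * (1/2 : ℝ)^k + 1 := by
  have h1 : (-1 : ℝ) ≤ (-1 : ℝ)^k := by
    rcases Nat.even_or_odd k with h | h
    · rw [h.neg_one_pow]; norm_num
    · rw [h.neg_one_pow]
  have h2 : (1/2 : ℝ)^k ≤ (1/2 : ℝ)^1 :=
    pow_le_pow_of_le_one (by norm_num) (by norm_num) hk
  norm_num at h2
  nlinarith

/-- The solution of `x_{n+1} = 1 - (1/2)|x_n| + (1/2)x_{n-1}` with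
`x_{-1} = x_0 = 0` satisfies `x_n = (1/3)(-1)^{n+1} - (4/3)(1/2)^{n+1} + 1`
for all `n ≥ -1`; in particular it is nonnegative from `n = 1` on,
`x_{2n} → 2/3` and `x_{2n+1} → 4/3`.  Here `z k = x_{k-1}`. -/
theorem stmt_13 (z : ℕ → ℝ) (h0 : z 0 = 0) (h1 : z 1 = 0)
    (hrec : ∀ n : ℕ, z (n + 2) = 1 - (1/2) * |z (n + 1)| + (1/2) * z n) :
    (∀ k : ℕ, z k = (1/3) * (-1 : ℝ)^k - (4/3) * (1/2 : ℝ)^k + 1) ∧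
    (∀ k : ℕ, 2 ≤ k → 0 ≤ z k) ∧
    Filter.Tendsto (fun n : ℕ => z (2 * n + 1)) Filter.atTop (nhds (2/3)) ∧
    Filter.Tendsto (fun n : ℕ => z (2 * n + 2)) Filter.atTop (nhds (4/3)) := by
  have key : ∀ n : ℕ, z n = (1/3) * (-1 : ℝ)^n - (4/3) * (1/2 : ℝ)^n + 1 ∧
      z (n+1) = (1/3) * (-1 : ℝ)^(n+1) - (4/3) * (1/2 : ℝ)^(n+1) + 1 := by
    intro n
    induction n with
    | zero => constructor <;> simp [h0, h1] <;> norm_num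
    | succ m ih =>
      refine ⟨ih.2, ?_⟩
      have habs : |z (m+1)| = z (m+1) := by
        rw [abs_of_nonneg]
        rw [ih.2]
        exact fnonneg (m+1) (by omega)
      rw [hrec m, habs, ih.1, ih.2]
      ring
  have hform : ∀ k : ℕ, z k = (1/3) * (-1 : ℝ)^k - (4/3) * (1/2 : ℝ)^k + 1 :=
    fun k => (key k).1
  refine ⟨hform, fun k hk => by rw [hform k]; exact fnonneg k (by omega), ?_, ?_⟩
  · have : (fun n : ℕ => z (2 * n + 1)) = fun n : ℕ => 2/3 - (2/3) * (1/4 : ℝ)^n := by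
      funext n
      rw [hform]
      rw [pow_add, pow_mul, pow_add, pow_mul]
      norm_num
      ring
    rw [this]
    have h4 : Filter.Tendsto (fun n : ℕ => (1/4 : ℝ)^n) Filter.atTop (nhds 0) :=
      tendsto_pow_atTop_nhds_zero_of_lt_one (by norm_num) (by norm_num)
    have := Filter.Tendsto.sub (tendsto_const_nhds (x := (2/3 : ℝ)))
      (h4.const_mul (2/3 : ℝ))
    simpa using this
  · have : (fun n : ℕ => z (2 * n + 2)) = fun n : ℕ => 4/3 - (1/3) * (1/4 : ℝ)^n := by
      funext n
      rw [hform]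
      rw [pow_add, pow_mul, pow_add, pow_mul]
      norm_num
      ring
    rw [this]
    have h4 : Filter.Tendsto (fun n : ℕ => (1/4 : ℝ)^n) Filter.atTop (nhds 0) :=
      tendsto_pow_atTop_nhds_zero_of_lt_one (by norm_num) (by norm_num)
    have := Filter.Tendsto.sub (tendsto_const_nhds (x := (4/3 : ℝ)))
      (h4.const_mul (1/3 : ℝ))
    simpa using this
end

section
/- Let m ≥ 2 be an integer and let C_{i,j} = [2i, 2i+2] × [2j, 2j+2]. For F(x,y) = (y, 1 - (1/2)|y| + (1/2)x) and any j ∈ {0, 1, …, m}: F(C_{m-j, m}) ⊆ C_{m, -j/2} if j is even, and F(C_{m-j, m}) ⊆ C_{m, (-j-1)/2} ∪ C_{m, (-j+1)/2} if j is odd. -/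
/-- For `m ≥ 2` and `0 ≤ j ≤ m`, the image of the square `C_{m-j,m}` under
`F(x,y) = (y, 1 - (1/2)|y| + (1/2)x)` is contained in `C_{m,-j/2}` if `j` is
even, and in `C_{m,(-j-1)/2} ∪ C_{m,(-j+1)/2}` if `j` is odd. -/
theorem stmt_16 (m j : ℤ) (hm : 2 ≤ m) (hj0 : 0 ≤ j) (hjm : j ≤ m) :
    let F : ℝ × ℝ → ℝ × ℝ := fun p => (p.2, 1 - (1/2) * |p.2| + (1/2) * p.1)
    let C : ℤ → ℤ → Set (ℝ × ℝ) := fun i k =>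
      Set.Icc (2*i : ℝ) (2*i + 2) ×ˢ Set.Icc (2*k : ℝ) (2*k + 2)
    (Even j → F '' C (m - j) m ⊆ C m (-j / 2)) ∧
    (Odd j → F '' C (m - j) m ⊆ C m ((-j - 1) / 2) ∪ C m ((-j + 1) / 2)) := by
  intro F C
  have hm' : (2:ℝ) ≤ (m:ℝ) := by exact_mod_cast hm
  constructor
  · rintro ⟨k, rfl⟩ p ⟨⟨x, y⟩, ⟨⟨hx1, hx2⟩, hy1, hy2⟩, rfl⟩
    have hy0 : (0:ℝ) ≤ y := by
      have : (2:ℝ) * m ≤ y := by push_cast at hy1 ⊢; linarith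
      linarith
    have habs : |y| = y := abs_of_nonneg hy0
    have hdiv : ((-(k + k)) / 2 : ℤ) = -k := by omega
    simp only [C, F, Set.mem_prod, Set.mem_Icc, hdiv, habs]
    push_cast at hx1 hx2 hy1 hy2 ⊢
    refine ⟨⟨by linarith, by linarith⟩, by linarith, by linarith⟩
  · rintro ⟨k, rfl⟩ p ⟨⟨x, y⟩, ⟨⟨hx1, hx2⟩, hy1, hy2⟩, rfl⟩
    have hy0 : (0:ℝ) ≤ y := by
      have : (2:ℝ) * m ≤ y := by push_cast at hy1 ⊢; linarith
      linarith
    have habs : |y| = y := abs_of_nonneg hy0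
    have hd1 : ((-(2 * k + 1) - 1) / 2 : ℤ) = -k - 1 := by omega
    have hd2 : ((-(2 * k + 1) + 1) / 2 : ℤ) = -k := by omega
    simp only [C, F, Set.mem_union, Set.mem_prod, Set.mem_Icc, hd1, hd2, habs]
    push_cast at hx1 hx2 hy1 hy2 ⊢
    rcases le_or_gt (1 - (1/2) * y + (1/2) * x) (-2 * k) with h | h
    · exact Or.inl ⟨⟨by linarith, by linarith⟩, by linarith, by linarith⟩
    · exact Or.inr ⟨⟨by linarith, by linarith⟩, by linarith, by linarith⟩
end
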